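/- Let T_1 and T_2 be discrete linearly ordered abelian groups with least positive elements 1_{T_1}, 1_{T_2}, each containing a distinguished positive cofinal element z_1, z_2 respectively, and such that T_1/⟨1_{T_1}⟩ ≅ ℚ ≅ T_2/⟨1_{T_2}⟩ as groups. Then there exists an isomorphism of ordered groups from T_1 onto T_2 sending z_1 to z_2 if and only if for every prime p, every n ≥ 1 and every k ∈ {0,…,p^n−1}: (there exists x ∈ T_1 with p^n·x = z_1 + k·1_{T_1}) if and only if (there exists x ∈ T_2 with p^n·x = z_2 + k·1_{T_2}). -/

import Mathlib

open AddSubgroup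

section OneGroup

variable {T : Type*} [AddCommGroup T] [LinearOrder T] [IsOrderedAddMonoid T]

lemma aux_discrete {e : T} (he : 0 < e ∧ ∀ x : T, 0 < x → e ≤ x) {t : T}
    (h0 : 0 ≤ t) (h1 : t < e) : t = 0 := by
  rcases eq_or_lt_of_le h0 with h | h
  · exact h.symm
  · exact absurd (he.2 t h) (not_le.mpr h1)

lemma aux_all_mem {e : T} (he : 0 < e ∧ ∀ x : T, 0 < x → e ≤ x)
    (hcof : ∀ t : T, ∃ m : ℤ, t ≤ m • e) (t : T) : ∃ n : ℤ, t = n • e := by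
  obtain ⟨b, hb⟩ := hcof t
  have hbdd : ∃ b : ℤ, ∀ n : ℤ, n • e ≤ t → n ≤ b :=
    ⟨b, fun n hn => (zsmul_le_zsmul_iff_left he.1).mp (hn.trans hb)⟩
  have hinh : ∃ n : ℤ, n • e ≤ t := by
    obtain ⟨m, hm⟩ := hcof (-t)
    exact ⟨-m, by rw [neg_zsmul]; exact neg_le.mp hm⟩
  obtain ⟨n, hn, hmax⟩ := Int.exists_greatest_of_bdd hbdd hinh
  refine ⟨n, ?_⟩
  have h0 : 0 ≤ t - n • e := sub_nonneg.mpr hn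
  have h1 : t - n • e < e := by
    by_contra h
    push_neg at h
    have h2 : (n + 1) • e ≤ t := by
      rw [add_zsmul, one_zsmul, add_comm]
      exact le_sub_iff_add_le.mp h
    have := hmax (n + 1) h2
    omega
  exact (sub_eq_zero.mp (aux_discrete he h0 h1)).symm ▸ rfl

lemma aux_notle {e z : T} (he : 0 < e ∧ ∀ x : T, 0 < x → e ≤ x) (hz : 0 < z)
    (hc : ∀ t : T, ∃ m : ℕ, t ≤ m • z)
    (hq : Nonempty ((T ⧸ AddSubgroup.zmultiples e) ≃+ ℚ)) (m : ℤ) : ¬ z ≤ m • e := by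
  intro hle
  have hcof : ∀ t : T, ∃ k : ℤ, t ≤ k • e := by
    intro t
    obtain ⟨n, hn⟩ := hc t
    refine ⟨n * m, ?_⟩
    calc t ≤ n • z := hn
      _ ≤ n • (m • e) := nsmul_le_nsmul_right hle n
      _ = (n * m) • e := by rw [← natCast_zsmul, smul_smul]
  have hall := aux_all_mem he hcof
  obtain ⟨q⟩ := hq
  have hz0 : ∀ x : T ⧸ zmultiples e, x = 0 := by
    intro x
    induction x using QuotientAddGroup.induction_on with
    | H t =>
      obtain ⟨n, rfl⟩ := hall t
      rw [QuotientAddGroup.eq_zero_iff]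
      exact mem_zmultiples_iff.mpr ⟨n, rfl⟩
  have h1 : q.symm 1 = q.symm 0 := by rw [hz0 (q.symm 1), hz0 (q.symm 0)]
  exact one_ne_zero (q.symm.injective h1)

end OneGroup
section OneGroupB

variable {T : Type*} [AddCommGroup T] [LinearOrder T] [IsOrderedAddMonoid T]

lemma aux_phi {e z : T} (he : 0 < e ∧ ∀ x : T, 0 < x → e ≤ x) (hz : 0 < z)
    (hc : ∀ t : T, ∃ m : ℕ, t ≤ m • z)
    (hq : Nonempty ((T ⧸ AddSubgroup.zmultiples e) ≃+ ℚ)) :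
    ∃ φ : T →+ ℚ, Function.Surjective φ ∧ (∀ t : T, φ t = 0 ↔ t ∈ zmultiples e) ∧ φ z = 1 := by
  obtain ⟨q⟩ := hq
  set ψ : T →+ ℚ := q.toAddMonoidHom.comp (QuotientAddGroup.mk' (zmultiples e)) with hψ
  have hkerψ : ∀ t : T, ψ t = 0 ↔ t ∈ zmultiples e := by
    intro t
    constructor
    · intro h
      have h2 : (QuotientAddGroup.mk' (zmultiples e)) t = 0 := by
        apply q.injective
        simpa [ψ] using h
      rwa [QuotientAddGroup.mk'_apply, QuotientAddGroup.eq_zero_iff] at h2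
    · intro h
      have h2 : (QuotientAddGroup.mk' (zmultiples e)) t = 0 := by
        rw [QuotientAddGroup.mk'_apply, QuotientAddGroup.eq_zero_iff]
        exact h
      simp only [ψ, AddMonoidHom.comp_apply, h2, map_zero]
  have hsurjψ : Function.Surjective ψ :=
    q.surjective.comp (QuotientAddGroup.mk'_surjective (zmultiples e))
  have hr : ψ z ≠ 0 := by
    intro h
    rw [hkerψ] at h
    obtain ⟨k, hk⟩ := mem_zmultiples_iff.mp h
    exact aux_notle he hz hc ⟨q⟩ k (le_of_eq hk.symm)
  refine ⟨(AddMonoidHom.mulLeft (ψ z)⁻¹).comp ψ, ?_, ?_, ?_⟩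
  · intro x
    obtain ⟨t, ht⟩ := hsurjψ (ψ z * x)
    exact ⟨t, by simp [ht, inv_mul_cancel_left₀ hr]⟩
  · intro t
    rw [← hkerψ t]
    simp [mul_eq_zero, inv_eq_zero, hr]
  · simp [inv_mul_cancel₀ hr]

lemma aux_pos {e z : T} (he : 0 < e ∧ ∀ x : T, 0 < x → e ≤ x) (hz : 0 < z)
    (hc : ∀ t : T, ∃ m : ℕ, t ≤ m • z)
    (hq : Nonempty ((T ⧸ AddSubgroup.zmultiples e) ≃+ ℚ)) {φ : T →+ ℚ}
    (hker : ∀ t : T, φ t = 0 ↔ t ∈ zmultiples e) (hφz : φ z = 1)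
    {t : T} (ht : 0 < φ t) : 0 < t := by
  set a : ℤ := (φ t).num with ha'
  set b : ℤ := ((φ t).den : ℤ) with hb'
  have hb : 0 < b := Int.natCast_pos.mpr (φ t).pos
  have ha : 0 < a := Rat.num_pos.mpr ht
  have hcast : (b : ℚ) * φ t = (a : ℚ) := by
    rw [ha', hb']
    push_cast
    rw [mul_comm]
    exact_mod_cast Rat.mul_den_eq_num (φ t)
  have hmem : b • t - a • z ∈ zmultiples e := by
    rw [← hker]
    simp only [map_sub, map_zsmul, hφz, zsmul_eq_mul, mul_one]
    rw [hcast, sub_self]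
  obtain ⟨s, hs⟩ := mem_zmultiples_iff.mp hmem
  by_contra hle
  push_neg at hle
  have h1 : b • t ≤ 0 := by
    have h := zsmul_nonneg (neg_nonneg.mpr hle) hb.le
    rw [smul_neg] at h
    exact neg_nonneg.mp h
  have h2 : z ≤ a • z := by
    have := (zsmul_left_strictMono hz).monotone (show (1:ℤ) ≤ a from ha)
    rwa [one_zsmul] at this
  have h3 : a • z ≤ (-s) • e := by
    have h4 : a • z = b • t - s • e := by rw [hs]; abel
    rw [h4, neg_zsmul]
    calc b • t - s • e ≤ 0 - s • e := sub_le_sub_right h1 _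
      _ = -(s • e) := zero_sub _
  exact aux_notle he hz hc hq (-s) (h2.trans h3)

lemma aux_rep {e z : T} {φ : T →+ ℚ}
    (hker : ∀ t : T, φ t = 0 ↔ t ∈ zmultiples e) (hφz : φ z = 1) (t : T) :
    ∃ b a m : ℤ, 0 < b ∧ b • t = a • z + m • e := by
  set a : ℤ := (φ t).num with ha'
  set b : ℤ := ((φ t).den : ℤ) with hb'
  have hb : 0 < b := Int.natCast_pos.mpr (φ t).pos
  have hcast : (b : ℚ) * φ t = (a : ℚ) := by
    rw [ha', hb']
    push_cast
    rw [mul_comm]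
    exact_mod_cast Rat.mul_den_eq_num (φ t)
  have hmem : b • t - a • z ∈ zmultiples e := by
    rw [← hker]
    simp only [map_sub, map_zsmul, hφz, zsmul_eq_mul, mul_one]
    rw [hcast, sub_self]
  obtain ⟨s, hs⟩ := mem_zmultiples_iff.mp hmem
  exact ⟨b, a, s, hb, by rw [hs]; abel⟩

lemma aux_dvd {e : T} (he0 : 0 < e) {φ : T →+ ℚ}
    (hker : ∀ t : T, φ t = 0 ↔ t ∈ zmultiples e)
    {b m : ℤ} (hb : b ≠ 0) {y : T} (hy : b • y = m • e) : b ∣ m := by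
  have heker : φ e = 0 := (hker e).mpr (mem_zmultiples e)
  have hy0 : φ y = 0 := by
    have : (b : ℚ) * φ y = (m : ℚ) * φ e := by
      have := congrArg φ hy
      simpa [map_zsmul, smul_eq_mul] using this
    rw [heker, mul_zero] at this
    exact (mul_eq_zero.mp this).resolve_left (by exact_mod_cast hb)
  obtain ⟨s, hs⟩ := mem_zmultiples_iff.mp ((hker y).mp hy0)
  have : (b * s) • e = m • e := by rw [mul_zsmul, hs, hy]
  exact ⟨s, ((zsmul_left_strictMono he0).injective this).symm⟩

lemma aux_div {e z : T} {φ : T →+ ℚ} (hsurj : Function.Surjective φ)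
    (hker : ∀ t : T, φ t = 0 ↔ t ∈ zmultiples e) (hφz : φ z = 1)
    {b : ℤ} (hb : b ≠ 0) : ∃ x : T, ∃ c : ℤ, b • x = z + c • e := by
  obtain ⟨u, hu⟩ := hsurj (b : ℚ)⁻¹
  have hmem : b • u - z ∈ zmultiples e := by
    rw [← hker]
    simp only [map_sub, map_zsmul, hφz, zsmul_eq_mul, hu]
    rw [mul_inv_cancel₀ (show ((b:ℤ):ℚ) ≠ 0 by exact_mod_cast hb), sub_self]
  obtain ⟨c, hc⟩ := mem_zmultiples_iff.mp hmem
  exact ⟨u, c, by rw [hc]; abel⟩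

end OneGroupB
section TwoGroup

variable {T₁ T₂ : Type*} [AddCommGroup T₁] [LinearOrder T₁] [IsOrderedAddMonoid T₁]
    [AddCommGroup T₂] [LinearOrder T₂] [IsOrderedAddMonoid T₂]

lemma aux_coeff {T : Type*} [AddCommGroup T] [LinearOrder T] [IsOrderedAddMonoid T] {e z : T} {φ : T →+ ℚ} (he0 : 0 < e)
    (hker : ∀ t : T, φ t = 0 ↔ t ∈ zmultiples e) (hφz : φ z = 1)
    {a₁ m₁ a₂ m₂ : ℤ} (h : a₁ • z + m₁ • e = a₂ • z + m₂ • e) : a₁ = a₂ ∧ m₁ = m₂ := by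
  have hφe : φ e = 0 := (hker e).mpr (mem_zmultiples e)
  have h1 : (a₁ : ℚ) = a₂ := by
    have h2 := congrArg φ h
    simpa [map_add, map_zsmul, hφz, hφe, zsmul_eq_mul] using h2
  have ha : a₁ = a₂ := by exact_mod_cast h1
  subst ha
  have h2 : m₁ • e = m₂ • e := add_left_cancel h
  exact ⟨rfl, (zsmul_left_strictMono he0).injective h2⟩

lemma aux_pp {e₁ z₁ : T₁} {e₂ z₂ : T₂}
    (hdir : ∀ p : ℕ, p.Prime → ∀ n : ℕ, 1 ≤ n → ∀ k : ℕ, k < p ^ n →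
      (∃ x : T₁, (p ^ n) • x = z₁ + k • e₁) → (∃ x : T₂, (p ^ n) • x = z₂ + k • e₂))
    (p : ℕ) (hp : p.Prime) (n : ℕ) (hn : 1 ≤ n) (c : ℤ)
    (h : ∃ x : T₁, ((p : ℤ) ^ n) • x = z₁ + c • e₁) :
    ∃ x : T₂, ((p : ℤ) ^ n) • x = z₂ + c • e₂ := by
  obtain ⟨x, hx⟩ := h
  set P : ℤ := (p : ℤ) ^ n with hP'
  have hPcast : ((p ^ n : ℕ) : ℤ) = P := by push_cast [hP']; ring
  have hp0 : (0 : ℤ) < (p : ℤ) := by exact_mod_cast hp.pos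
  have hP : 0 < P := pow_pos hp0 n
  set k : ℤ := c % P with hk'
  set q : ℤ := c / P with hq'
  have hk0 : 0 ≤ k := Int.emod_nonneg c hP.ne'
  have hkP : k < P := Int.emod_lt_of_pos c hP
  have hcq : c = P * q + k := (Int.mul_ediv_add_emod c P).symm
  have hkt : (k.toNat : ℤ) = k := Int.toNat_of_nonneg hk0
  have hx1 : P • (x - q • e₁) = z₁ + k • e₁ := by
    have hPq : P • (q • e₁) = (P * q) • e₁ := (mul_zsmul e₁ P q).symm
    rw [smul_sub, hx, hPq, hcq, add_zsmul]
    abel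
  have h1 : ∃ y : T₁, (p ^ n) • y = z₁ + k.toNat • e₁ := by
    refine ⟨x - q • e₁, ?_⟩
    calc (p ^ n) • (x - q • e₁) = ((p ^ n : ℕ) : ℤ) • (x - q • e₁) := (natCast_zsmul _ _).symm
      _ = P • (x - q • e₁) := by rw [hPcast]
      _ = z₁ + k • e₁ := hx1
      _ = z₁ + k.toNat • e₁ := by congr 1; rw [← natCast_zsmul, hkt]
  have hklt : k.toNat < p ^ n := by
    have : (k.toNat : ℤ) < ((p ^ n : ℕ) : ℤ) := by rw [hkt, hPcast]; exact hkP
    exact_mod_cast this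
  obtain ⟨y₂, hy₂⟩ := hdir p hp n hn k.toNat hklt h1
  refine ⟨y₂ + q • e₂, ?_⟩
  have hy₂' : P • y₂ = z₂ + k • e₂ := by
    calc P • y₂ = ((p ^ n : ℕ) : ℤ) • y₂ := by rw [hPcast]
      _ = (p ^ n) • y₂ := natCast_zsmul _ _
      _ = z₂ + k.toNat • e₂ := hy₂
      _ = z₂ + k • e₂ := by congr 1; rw [← natCast_zsmul, hkt]
  have hPq : P • (q • e₂) = (P * q) • e₂ := (mul_zsmul e₂ P q).symm
  rw [smul_add, hy₂', hPq, hcq, add_zsmul]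
  abel

lemma aux_cc {e₁ z₁ : T₁} {e₂ z₂ : T₂} (he₂0 : 0 < e₂) {φ₂ : T₂ →+ ℚ}
    (hker₂ : ∀ t : T₂, φ₂ t = 0 ↔ t ∈ zmultiples e₂)
    (hdir : ∀ p : ℕ, p.Prime → ∀ n : ℕ, 1 ≤ n → ∀ k : ℕ, k < p ^ n →
      (∃ x : T₁, (p ^ n) • x = z₁ + k • e₁) → (∃ x : T₂, (p ^ n) • x = z₂ + k • e₂))
    {b : ℕ} (hb : 0 < b) {c₁ c₂ : ℤ}
    (h₁ : ∃ x : T₁, (b : ℤ) • x = z₁ + c₁ • e₁)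
    (h₂ : ∃ x : T₂, (b : ℤ) • x = z₂ + c₂ • e₂) : (b : ℤ) ∣ c₁ - c₂ := by
  rcases eq_or_ne c₁ c₂ with h | hne
  · simp [h]
  have key : ∀ p : ℕ, p.Prime → ((p : ℤ) ^ (b.factorization p)) ∣ c₁ - c₂ := by
    intro p hp
    set v := b.factorization p with hv
    rcases Nat.eq_zero_or_pos v with h0 | hvpos
    · rw [h0]; simp
    obtain ⟨d, hd⟩ : (p ^ v : ℕ) ∣ b := Nat.ordProj_dvd b p
    have hcast : ((p : ℤ) ^ v) * (d : ℤ) = (b : ℤ) := by exact_mod_cast hd.symm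
    obtain ⟨x, hx⟩ := h₁
    have h₁' : ∃ x : T₁, ((p : ℤ) ^ v) • x = z₁ + c₁ • e₁ :=
      ⟨(d : ℤ) • x, by rw [smul_smul, hcast, hx]⟩
    obtain ⟨y, hy⟩ := aux_pp hdir p hp v hvpos c₁ h₁'
    obtain ⟨x₂, hx₂⟩ := h₂
    have hx₂' : ((p : ℤ) ^ v) • ((d : ℤ) • x₂) = z₂ + c₂ • e₂ := by
      rw [smul_smul, hcast, hx₂]
    have hsub : ((p : ℤ) ^ v) • (y - (d : ℤ) • x₂) = (c₁ - c₂) • e₂ := by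
      rw [smul_sub, hy, hx₂', sub_zsmul]
      abel
    have hp0 : ((p : ℤ)) ≠ 0 := by exact_mod_cast hp.pos.ne'
    exact aux_dvd he₂0 hker₂ (pow_ne_zero v hp0) hsub
  have hD : (c₁ - c₂).natAbs ≠ 0 := by
    simp [Int.natAbs_ne_zero, sub_ne_zero.mpr hne]
  have hnat : ∀ p : ℕ, p.Prime → p ^ (b.factorization p) ∣ (c₁ - c₂).natAbs := by
    intro p hp
    have := key p hp
    rw [← Int.natAbs_dvd_natAbs] at this
    simpa [Int.natAbs_pow] using this
  have hle : b.factorization ≤ (c₁ - c₂).natAbs.factorization := by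
    rw [Finsupp.le_def]
    intro p
    by_cases hp : p.Prime
    · exact (Nat.Prime.pow_dvd_iff_le_factorization hp hD).mp (hnat p hp)
    · simp [Nat.factorization_eq_zero_of_not_prime b hp]
  have hdvd : b ∣ (c₁ - c₂).natAbs := (Nat.factorization_le_iff_dvd hb.ne' hD).mp hle
  exact Int.dvd_natAbs.mp (Int.natCast_dvd_natCast.mpr hdvd)

lemma aux_transfer {e₁ z₁ : T₁} {e₂ z₂ : T₂} (he₁0 : 0 < e₁) (he₂0 : 0 < e₂)
    {φ₁ : T₁ →+ ℚ} {φ₂ : T₂ →+ ℚ}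
    (hsurj₁ : Function.Surjective φ₁)
    (hker₁ : ∀ t : T₁, φ₁ t = 0 ↔ t ∈ zmultiples e₁) (hφz₁ : φ₁ z₁ = 1)
    (hsurj₂ : Function.Surjective φ₂)
    (hker₂ : ∀ t : T₂, φ₂ t = 0 ↔ t ∈ zmultiples e₂) (hφz₂ : φ₂ z₂ = 1)
    (hdir : ∀ p : ℕ, p.Prime → ∀ n : ℕ, 1 ≤ n → ∀ k : ℕ, k < p ^ n →
      (∃ x : T₁, (p ^ n) • x = z₁ + k • e₁) → (∃ x : T₂, (p ^ n) • x = z₂ + k • e₂)) :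
    ∀ b : ℕ, 0 < b → ∀ a m : ℤ, (∃ x : T₁, (b : ℤ) • x = a • z₁ + m • e₁) →
      ∃ x : T₂, (b : ℤ) • x = a • z₂ + m • e₂ := by
  intro b hb a m hex
  obtain ⟨x, hx⟩ := hex
  have hbz : ((b : ℕ) : ℤ) ≠ 0 := by exact_mod_cast hb.ne'
  obtain ⟨x₁, c₁, hx₁⟩ := aux_div hsurj₁ hker₁ hφz₁ hbz
  obtain ⟨x₂, c₂, hx₂⟩ := aux_div hsurj₂ hker₂ hφz₂ hbz
  have hcc : (b : ℤ) ∣ c₁ - c₂ := aux_cc he₂0 hker₂ hdir hb ⟨x₁, hx₁⟩ ⟨x₂, hx₂⟩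
  have h1 : (b : ℤ) • (x - a • x₁) = (m - a * c₁) • e₁ := by
    have hax : (b : ℤ) • (a • x₁) = a • (z₁ + c₁ • e₁) := by
      rw [smul_comm, hx₁]
    rw [smul_sub, hx, hax, smul_add, smul_smul, sub_zsmul, mul_zsmul]
    abel
  have hd1 : (b : ℤ) ∣ (m - a * c₁) := aux_dvd he₁0 hker₁ hbz h1
  have hd2 : (b : ℤ) ∣ (m - a * c₂) := by
    have heq : m - a * c₂ = (m - a * c₁) + a * (c₁ - c₂) := by ring
    rw [heq]
    exact dvd_add hd1 (Dvd.dvd.mul_left hcc a)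
  obtain ⟨s, hs⟩ := hd2
  refine ⟨a • x₂ + s • e₂, ?_⟩
  have hax : (b : ℤ) • (a • x₂) = a • z₂ + (a * c₂) • e₂ := by
    rw [smul_comm, hx₂, smul_add, smul_smul, mul_zsmul]
  have hse : (b : ℤ) • (s • e₂) = (m - a * c₂) • e₂ := by
    rw [smul_smul, ← hs]
  rw [smul_add, hax, hse]
  have : (a * c₂) • e₂ + (m - a * c₂) • e₂ = m • e₂ := by
    rw [← add_zsmul]
    congr 1
    ring
  rw [add_assoc, this]

lemma aux_lift {e₁ z₁ : T₁} {e₂ z₂ : T₂} (he₁0 : 0 < e₁)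
    {φ₁ : T₁ →+ ℚ}
    (hker₁ : ∀ t : T₁, φ₁ t = 0 ↔ t ∈ zmultiples e₁) (hφz₁ : φ₁ z₁ = 1)
    (htr : ∀ b : ℕ, 0 < b → ∀ a m : ℤ, (∃ x : T₁, (b : ℤ) • x = a • z₁ + m • e₁) →
      ∃ x : T₂, (b : ℤ) • x = a • z₂ + m • e₂)
    (t : T₁) :
    ∃ x : T₂, ∀ b a m : ℤ, 0 < b → b • t = a • z₁ + m • e₁ → b • x = a • z₂ + m • e₂ := by
  obtain ⟨b₀, a₀, m₀, hb₀, hrep⟩ := aux_rep hker₁ hφz₁ t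
  have hb₀t : ((b₀.toNat : ℕ) : ℤ) = b₀ := Int.toNat_of_nonneg hb₀.le
  obtain ⟨x, hx⟩ := htr b₀.toNat (by omega) a₀ m₀ ⟨t, by rw [hb₀t]; exact hrep⟩
  rw [hb₀t] at hx
  refine ⟨x, ?_⟩
  intro b a m hb hbt
  have hcross : (b * a₀) • z₁ + (b * m₀) • e₁ = (b₀ * a) • z₁ + (b₀ * m) • e₁ := by
    have h1 : b • (b₀ • t) = b₀ • (b • t) := smul_comm b b₀ t
    rw [hrep, hbt] at h1
    rw [mul_zsmul, mul_zsmul, mul_zsmul, mul_zsmul]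
    rw [smul_add, smul_add] at h1
    exact h1
  obtain ⟨ha, hm⟩ := aux_coeff he₁0 hker₁ hφz₁ hcross
  have key : b₀ • (b • x) = b₀ • (a • z₂ + m • e₂) := by
    have h2 : b • (b₀ • x) = b • (a₀ • z₂ + m₀ • e₂) := by rw [hx]
    rw [smul_comm] at h2
    rw [h2, smul_add, smul_add, smul_smul, smul_smul, smul_smul, smul_smul, ha, hm]
  exact zsmul_right_injective hb₀.ne' key

end TwoGroup
section Main

variable {T₁ T₂ : Type*} [AddCommGroup T₁] [LinearOrder T₁] [IsOrderedAddMonoid T₁]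
    [AddCommGroup T₂] [LinearOrder T₂] [IsOrderedAddMonoid T₂]

lemma aux_construct (e₁ z₁ : T₁) (e₂ z₂ : T₂)
    (he₁ : 0 < e₁ ∧ ∀ x : T₁, 0 < x → e₁ ≤ x)
    (he₂ : 0 < e₂ ∧ ∀ x : T₂, 0 < x → e₂ ≤ x)
    (hz₁ : 0 < z₁) (hc₁ : ∀ t : T₁, ∃ m : ℕ, t ≤ m • z₁)
    (hz₂ : 0 < z₂) (hc₂ : ∀ t : T₂, ∃ m : ℕ, t ≤ m • z₂)
    (hq₁ : Nonempty ((T₁ ⧸ AddSubgroup.zmultiples e₁) ≃+ ℚ))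
    (hq₂ : Nonempty ((T₂ ⧸ AddSubgroup.zmultiples e₂) ≃+ ℚ))
    (hDD : ∀ p : ℕ, p.Prime → ∀ n : ℕ, 1 ≤ n → ∀ k : ℕ, k < p ^ n →
        ((∃ x : T₁, (p ^ n) • x = z₁ + k • e₁) ↔
         (∃ x : T₂, (p ^ n) • x = z₂ + k • e₂))) :
    ∃ f : T₁ ≃+ T₂, StrictMono f ∧ f z₁ = z₂ := by
  obtain ⟨φ₁, hsurj₁, hker₁, hφz₁⟩ := aux_phi he₁ hz₁ hc₁ hq₁
  obtain ⟨φ₂, hsurj₂, hker₂, hφz₂⟩ := aux_phi he₂ hz₂ hc₂ hq₂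
  have hdir₁₂ : ∀ p : ℕ, p.Prime → ∀ n : ℕ, 1 ≤ n → ∀ k : ℕ, k < p ^ n →
      (∃ x : T₁, (p ^ n) • x = z₁ + k • e₁) → (∃ x : T₂, (p ^ n) • x = z₂ + k • e₂) :=
    fun p hp n hn k hk => (hDD p hp n hn k hk).mp
  have hdir₂₁ : ∀ p : ℕ, p.Prime → ∀ n : ℕ, 1 ≤ n → ∀ k : ℕ, k < p ^ n →
      (∃ x : T₂, (p ^ n) • x = z₂ + k • e₂) → (∃ x : T₁, (p ^ n) • x = z₁ + k • e₁) :=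
    fun p hp n hn k hk => (hDD p hp n hn k hk).mpr
  have htr₁₂ := aux_transfer he₁.1 he₂.1 hsurj₁ hker₁ hφz₁ hsurj₂ hker₂ hφz₂ hdir₁₂
  have htr₂₁ := aux_transfer he₂.1 he₁.1 hsurj₂ hker₂ hφz₂ hsurj₁ hker₁ hφz₁ hdir₂₁
  choose f hf using fun t => aux_lift he₁.1 hker₁ hφz₁ htr₁₂ t
  choose g hg using fun t => aux_lift he₂.1 hker₂ hφz₂ htr₂₁ t
  -- additivity
  have hadd : ∀ s t : T₁, f (s + t) = f s + f t := by
    intro s t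
    obtain ⟨b₁, a₁, m₁, hb₁, hr₁⟩ := aux_rep hker₁ hφz₁ s
    obtain ⟨b₂, a₂, m₂, hb₂, hr₂⟩ := aux_rep hker₁ hφz₁ t
    have hbb : 0 < b₁ * b₂ := mul_pos hb₁ hb₂
    have hst : (b₁ * b₂) • (s + t) = (b₂ * a₁ + b₁ * a₂) • z₁ + (b₂ * m₁ + b₁ * m₂) • e₁ := by
      rw [smul_add]
      have h1 : (b₁ * b₂) • s = (b₂ * a₁) • z₁ + (b₂ * m₁) • e₁ := by
        rw [mul_comm b₁ b₂, mul_zsmul, hr₁, smul_add, smul_smul, smul_smul]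
      have h2 : (b₁ * b₂) • t = (b₁ * a₂) • z₁ + (b₁ * m₂) • e₁ := by
        rw [mul_zsmul, hr₂, smul_add, smul_smul, smul_smul]
      rw [h1, h2, add_zsmul, add_zsmul]
      abel
    have hL : (b₁ * b₂) • f (s + t) = (b₂ * a₁ + b₁ * a₂) • z₂ + (b₂ * m₁ + b₁ * m₂) • e₂ :=
      hf (s + t) _ _ _ hbb hst
    have hR : (b₁ * b₂) • (f s + f t) = (b₂ * a₁ + b₁ * a₂) • z₂ + (b₂ * m₁ + b₁ * m₂) • e₂ := by
      rw [smul_add]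
      have h1 : (b₁ * b₂) • f s = (b₂ * a₁) • z₂ + (b₂ * m₁) • e₂ := by
        rw [mul_comm b₁ b₂, mul_zsmul, hf s _ _ _ hb₁ hr₁, smul_add, smul_smul, smul_smul]
      have h2 : (b₁ * b₂) • f t = (b₁ * a₂) • z₂ + (b₁ * m₂) • e₂ := by
        rw [mul_zsmul, hf t _ _ _ hb₂ hr₂, smul_add, smul_smul, smul_smul]
      rw [h1, h2, add_zsmul, add_zsmul]
      abel
    exact zsmul_right_injective hbb.ne' (hL.trans hR.symm)
  have hgf : ∀ t : T₁, g (f t) = t := by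
    intro t
    obtain ⟨b, a, m, hb, hr⟩ := aux_rep hker₁ hφz₁ t
    have h1 := hf t _ _ _ hb hr
    have h2 := hg (f t) _ _ _ hb h1
    exact zsmul_right_injective hb.ne' (h2.trans hr.symm)
  have hfg : ∀ t : T₂, f (g t) = t := by
    intro t
    obtain ⟨b, a, m, hb, hr⟩ := aux_rep hker₂ hφz₂ t
    have h1 := hg t _ _ _ hb hr
    have h2 := hf (g t) _ _ _ hb h1
    exact zsmul_right_injective hb.ne' (h2.trans hr.symm)
  have hfz : f z₁ = z₂ := by
    have h1 := hf z₁ 1 1 0 one_pos (by simp)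
    simpa using h1
  -- positivity
  have hpos : ∀ t : T₁, 0 < t → 0 < f t := by
    intro t ht
    obtain ⟨b, a, m, hb, hr⟩ := aux_rep hker₁ hφz₁ t
    have hft := hf t _ _ _ hb hr
    have hbt : 0 < b • t := zsmul_pos ht hb
    rcases lt_trichotomy a 0 with ha | ha | ha
    · exfalso
      have h1 : (-a) • z₁ < m • e₁ := by
        have h0 : 0 < a • z₁ + m • e₁ := hr ▸ hbt
        rw [neg_zsmul]
        exact neg_lt_iff_pos_add.mpr (by rw [add_comm] at h0; exact h0)
      have h2 : z₁ ≤ (-a) • z₁ := by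
        have := (zsmul_left_strictMono hz₁).monotone (show (1 : ℤ) ≤ -a by omega)
        simpa using this
      exact aux_notle he₁ hz₁ hc₁ hq₁ m (h2.trans h1.le)
    · subst ha
      have hme : 0 < m • e₁ := by
        have : b • t = m • e₁ := by rw [hr, zero_zsmul, zero_add]
        rwa [this] at hbt
      have hm : 0 < m := by
        by_contra hmn
        push_neg at hmn
        have h5 := (zsmul_left_strictMono he₁.1).monotone hmn
        simp only [zero_zsmul] at h5
        exact absurd hme (not_lt.mpr (by simpa using h5))
      have hfme : 0 < m • e₂ := by
        have h5 := zsmul_left_strictMono he₂.1 hm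
        simpa using h5
      have : 0 < b • f t := by
        rw [hft, zero_zsmul, zero_add]
        exact hfme
      have h3 := (zsmul_lt_zsmul_iff_right hb (a := (0 : T₂)) (b := f t))
      rw [smul_zero] at h3
      exact h3.mp this
    · by_contra hle
      push_neg at hle
      have h1 : b • f t ≤ 0 := by
        have := (zsmul_le_zsmul_iff_right hb (a := f t) (b := (0 : T₂))).mpr hle
        rwa [smul_zero] at this
      have h2 : a • z₂ ≤ (-m) • e₂ := by
        rw [neg_zsmul]
        have h6 : a • z₂ + m • e₂ ≤ 0 := hft ▸ h1
        calc a • z₂ = (a • z₂ + m • e₂) - m • e₂ := by abel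
          _ ≤ 0 - m • e₂ := sub_le_sub_right h6 _
          _ = -(m • e₂) := zero_sub _
      have h3 : z₂ ≤ a • z₂ := by
        have := (zsmul_left_strictMono hz₂).monotone (show (1 : ℤ) ≤ a by omega)
        simpa using this
      exact aux_notle he₂ hz₂ hc₂ hq₂ (-m) (h3.trans h2)
  let F : T₁ ≃+ T₂ :=
    { toFun := f, invFun := g, left_inv := hgf, right_inv := hfg,
      map_add' := hadd }
  refine ⟨F, ?_, hfz⟩
  intro x y hxy
  have h1 : 0 < F (y - x) := hpos _ (sub_pos.mpr hxy)
  rw [map_sub] at h1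
  exact sub_pos.mp h1

end Main


/-- Two discrete linearly ordered abelian groups with distinguished positive cofinal
elements, whose quotients by the least positive elements are isomorphic to `ℚ`, are
isomorphic (as ordered groups with distinguished element) iff `z_i + k•1_{T_i}` is
divisible by `p^n` in `T_1` exactly when it is in `T_2`, for all primes `p`, `n ≥ 1`
and `k < p^n`. -/
theorem discrete_iso_iff_same_DD (T₁ T₂ : Type*)
    [AddCommGroup T₁] [LinearOrder T₁] [IsOrderedAddMonoid T₁]
    [AddCommGroup T₂] [LinearOrder T₂] [IsOrderedAddMonoid T₂]
    (e₁ z₁ : T₁) (e₂ z₂ : T₂)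
    (he₁ : 0 < e₁ ∧ ∀ x : T₁, 0 < x → e₁ ≤ x)
    (he₂ : 0 < e₂ ∧ ∀ x : T₂, 0 < x → e₂ ≤ x)
    (hz₁ : 0 < z₁) (hc₁ : ∀ t : T₁, ∃ m : ℕ, t ≤ m • z₁)
    (hz₂ : 0 < z₂) (hc₂ : ∀ t : T₂, ∃ m : ℕ, t ≤ m • z₂)
    (hq₁ : Nonempty ((T₁ ⧸ AddSubgroup.zmultiples e₁) ≃+ ℚ))
    (hq₂ : Nonempty ((T₂ ⧸ AddSubgroup.zmultiples e₂) ≃+ ℚ)) :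
    (∃ f : T₁ ≃+ T₂, StrictMono f ∧ f z₁ = z₂) ↔
      (∀ p : ℕ, p.Prime → ∀ n : ℕ, 1 ≤ n → ∀ k : ℕ, k < p ^ n →
        ((∃ x : T₁, (p ^ n) • x = z₁ + k • e₁) ↔
         (∃ x : T₂, (p ^ n) • x = z₂ + k • e₂))) := by
  constructor
  · rintro ⟨f, hmono, hfz⟩
    have hmono' : StrictMono f.symm := by
      intro x y h
      by_contra hle
      push_neg at hle
      have := hmono.monotone hle
      rw [f.apply_symm_apply, f.apply_symm_apply] at this
      exact absurd h (not_lt.mpr this)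
    have hf0 : f 0 = 0 := map_zero f
    have hfe : f e₁ = e₂ := by
      have h1 : 0 < f e₁ := by
        have := hmono he₁.1
        rwa [hf0] at this
      have h2 : e₂ ≤ f e₁ := he₂.2 _ h1
      have h3 : 0 < f.symm e₂ := by
        have := hmono' he₂.1
        rwa [map_zero] at this
      have h4 : e₁ ≤ f.symm e₂ := he₁.2 _ h3
      have h5 : f e₁ ≤ e₂ := by
        have := hmono.monotone h4
        rwa [f.apply_symm_apply] at this
      exact le_antisymm h5 h2
    intro p hp n hn k hk
    constructor
    · rintro ⟨x, hx⟩
      refine ⟨f x, ?_⟩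
      have := congrArg f hx
      rwa [map_nsmul, map_add, map_nsmul, hfz, hfe] at this
    · rintro ⟨x, hx⟩
      refine ⟨f.symm x, ?_⟩
      have := congrArg f.symm hx
      have hsz : f.symm z₂ = z₁ := by rw [← hfz, f.symm_apply_apply]
      have hse : f.symm e₂ = e₁ := by rw [← hfe, f.symm_apply_apply]
      rwa [map_nsmul, map_add, map_nsmul, hsz, hse] at this
  · intro hDD
    exact aux_construct e₁ z₁ e₂ z₂ he₁ he₂ hz₁ hc₁ hz₂ hc₂ hq₁ hq₂ hDD
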